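/- Let f be an analytic function on an open neighborhood of the closed unit disc such that f has no zeroes on the unit circle and f(0) ≠ 0. Then ln|f(0)| ≤ (1/2π)·∫₀^{2π} ln|f(e^{it})| dt. -/

import Mathlib

open Metric Set Function Complex intervalIntegral MeasureTheory Filter FormalMultilinearSeries

lemma jensen_exists_primitive {ρ : ℝ} {φ : ℂ → ℂ} (hρ : 0 < ρ)
    (hφ : AnalyticOnNhd ℂ φ (ball (0:ℂ) ρ)) :
    ∃ F : ℂ → ℂ, ∀ z ∈ ball (0:ℂ) ρ, HasDerivAt F (φ z) z := by
  have hφ' : AnalyticOnNhd ℂ (deriv φ) (ball (0:ℂ) ρ) := hφ.deriv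
  -- derivative of w ↦ w * φ (c * w)
  have hder : ∀ (c : ℂ) (x : ℂ), c * x ∈ ball (0:ℂ) ρ →
      HasDerivAt (fun w => w * φ (c * w))
        (φ (c * x) + x * ((c : ℂ) * deriv φ (c * x))) x := by
    intro c x hcx
    have h₁ : HasDerivAt (fun w : ℂ => c * w) c x := by
      simpa using (hasDerivAt_id x).const_mul c
    have h₂ : HasDerivAt φ (deriv φ (c * x)) (c * x) :=
      (hφ _ hcx).differentiableAt.hasDerivAt
    have h₃ : HasDerivAt (fun w => φ (c * w)) (deriv φ (c * x) * c) x :=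
      h₂.comp x h₁
    have h₄ : HasDerivAt (fun w => w * φ (c * w))
        (1 * φ (c * x) + x * (deriv φ (c * x) * c)) x := (hasDerivAt_id x).mul h₃
    convert h₄ using 1
    ring
  refine ⟨fun x => ∫ t in (0:ℝ)..1, x * φ ((t:ℂ) * x), ?_⟩
  intro z hz
  rw [mem_ball_zero_iff] at hz
  set ε : ℝ := (ρ - ‖z‖) / 2 with hε
  have hεpos : 0 < ε := by rw [hε]; linarith
  set r : ℝ := (ρ + ‖z‖) / 2 with hrdef
  have hrρ : r < ρ := by rw [hrdef]; linarith
  have hr0 : 0 ≤ r := by positivity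
  have hKsub : closedBall (0:ℂ) r ⊆ ball (0:ℂ) ρ := closedBall_subset_ball hrρ
  -- bounds on compact set
  obtain ⟨M, hM⟩ := (isCompact_closedBall (0:ℂ) r).exists_bound_of_continuousOn
    (hφ.continuousOn.mono hKsub)
  obtain ⟨M', hM'⟩ := (isCompact_closedBall (0:ℂ) r).exists_bound_of_continuousOn
    (hφ'.continuousOn.mono hKsub)
  have hM0 : 0 ≤ M := le_trans (norm_nonneg _) (hM 0 (mem_closedBall_self hr0))
  have hM'0 : 0 ≤ M' := le_trans (norm_nonneg _) (hM' 0 (mem_closedBall_self hr0))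
  -- membership helpers
  have hmem : ∀ (t : ℝ), t ∈ Set.Icc (0:ℝ) 1 → ∀ (x : ℂ), ‖x‖ ≤ r →
      (t:ℂ) * x ∈ closedBall (0:ℂ) r := by
    intro t ht x hx
    rw [mem_closedBall_zero_iff, norm_mul, Complex.norm_real]
    calc ‖t‖ * ‖x‖ ≤ 1 * r := by
          apply mul_le_mul _ hx (norm_nonneg _) zero_le_one
          rw [Real.norm_eq_abs, abs_le]; constructor <;> linarith [ht.1, ht.2]
      _ = r := one_mul r
  have hxr : ∀ x : ℂ, x ∈ ball z ε → ‖x‖ ≤ r := by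
    intro x hx
    rw [mem_ball] at hx
    have := norm_sub_norm_le x z
    have : ‖x‖ - ‖z‖ ≤ dist x z := le_trans (norm_sub_norm_le x z) (by rw [dist_eq_norm])
    rw [hrdef]; have := hx; rw [hε] at this; linarith [dist_nonneg (x := x) (y := z)]
  -- continuity helper
  have hcψ : ∀ (ψ : ℂ → ℂ), AnalyticOnNhd ℂ ψ (ball (0:ℂ) ρ) → ∀ (x : ℂ), ‖x‖ ≤ r →
      ContinuousOn (fun t : ℝ => ψ ((t:ℂ) * x)) (Set.Icc 0 1) := by
    intro ψ hψ x hx t ht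
    have hmul : ContinuousAt (fun t : ℝ => (t:ℂ) * x) t :=
      (Complex.continuous_ofReal.mul continuous_const).continuousAt
    exact (ContinuousAt.comp (x := t) (g := ψ)
      ((hψ _ (hKsub (hmem t ht x hx))).continuousAt) hmul).continuousWithinAt
  have hcont : ∀ (x : ℂ), ‖x‖ ≤ r →
      ContinuousOn (fun t : ℝ => x * φ ((t:ℂ) * x)) (Set.Icc 0 1) := by
    intro x hx
    exact ContinuousOn.mul continuousOn_const (hcψ φ hφ x hx)
  have hcont' : ContinuousOn
      (fun t : ℝ => φ ((t:ℂ) * z) + z * ((t:ℂ) * deriv φ ((t:ℂ) * z))) (Set.Icc 0 1) := by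
    have hz' : ‖z‖ ≤ r := by rw [hrdef]; linarith
    apply ContinuousOn.add (hcψ φ hφ z hz')
    apply ContinuousOn.mul continuousOn_const
    exact ContinuousOn.mul (Complex.continuous_ofReal.continuousOn) (hcψ (deriv φ) hφ' z hz')
  have hι : Set.uIoc (0:ℝ) 1 ⊆ Set.Icc 0 1 := by
    rw [Set.uIoc_of_le zero_le_one]; exact Set.Ioc_subset_Icc_self
  have hz' : ‖z‖ ≤ r := by rw [hrdef]; linarith
  -- apply dominated differentiation
  have main := intervalIntegral.hasDerivAt_integral_of_dominated_loc_of_deriv_le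
    (F := fun (x : ℂ) (t : ℝ) => x * φ ((t:ℂ) * x))
    (F' := fun (x : ℂ) (t : ℝ) => φ ((t:ℂ) * x) + x * ((t:ℂ) * deriv φ ((t:ℂ) * x)))
    (x₀ := z) (a := 0) (b := 1) (μ := volume) (bound := fun _ => M + r * M')
    (Metric.ball_mem_nhds z hεpos) ?_ ?_ ?_ ?_ ?_ ?_
  · -- conclude
    obtain ⟨-, hF⟩ := main
    have hFTC : (∫ t in (0:ℝ)..1, (φ ((t:ℂ) * z) + z * ((t:ℂ) * deriv φ ((t:ℂ) * z)))) = φ z := by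
      have heq : ∀ t ∈ Set.uIcc (0:ℝ) 1,
          HasDerivAt (fun s : ℝ => (s:ℂ) * φ ((s:ℂ) * z))
            (φ ((t:ℂ) * z) + z * ((t:ℂ) * deriv φ ((t:ℂ) * z))) t := by
        intro t ht
        rw [Set.uIcc_of_le zero_le_one] at ht
        have hmem' : (z:ℂ) * (t:ℂ) ∈ ball (0:ℂ) ρ := by
          have := hmem t ht z hz'
          rw [mul_comm]; exact hKsub this
        have h5 := (hder z (t:ℂ) hmem').comp_ofReal
        have h6 : (fun s : ℝ => (s:ℂ) * φ (z * (s:ℂ))) = (fun s : ℝ => (s:ℂ) * φ ((s:ℂ) * z)) := by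
          funext s; rw [mul_comm z (s:ℂ)]
        rw [h6] at h5
        convert h5 using 1
        rw [mul_comm ((t:ℂ)) z]
        ring
      have hint : IntervalIntegrable
          (fun t : ℝ => φ ((t:ℂ) * z) + z * ((t:ℂ) * deriv φ ((t:ℂ) * z))) volume 0 1 := by
        apply ContinuousOn.intervalIntegrable
        rwa [Set.uIcc_of_le zero_le_one]
      have := intervalIntegral.integral_eq_sub_of_hasDerivAt heq hint
      rw [this]
      push_cast
      simp
    rwa [hFTC] at hF
  · -- measurability of F x
    filter_upwards [Metric.ball_mem_nhds z hεpos] with x hx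
    exact ((hcont x (hxr x hx)).mono hι).aestronglyMeasurable measurableSet_uIoc
  · -- integrability at z
    apply ContinuousOn.intervalIntegrable
    rw [Set.uIcc_of_le zero_le_one]
    exact hcont z hz'
  · -- measurability of F' z
    exact (hcont'.mono hι).aestronglyMeasurable measurableSet_uIoc
  · -- bound
    refine Filter.Eventually.of_forall (fun t ht x hx => ?_)
    have ht' : t ∈ Set.Icc (0:ℝ) 1 := hι ht
    have hxr' := hxr x hx
    have h1 : ‖φ ((t:ℂ) * x)‖ ≤ M := hM _ (hmem t ht' x hxr')
    have h2 : ‖deriv φ ((t:ℂ) * x)‖ ≤ M' := hM' _ (hmem t ht' x hxr')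
    calc ‖φ ((t:ℂ) * x) + x * ((t:ℂ) * deriv φ ((t:ℂ) * x))‖
        ≤ ‖φ ((t:ℂ) * x)‖ + ‖x * ((t:ℂ) * deriv φ ((t:ℂ) * x))‖ := norm_add_le _ _
      _ ≤ M + r * M' := by
          apply add_le_add h1
          rw [norm_mul, norm_mul, Complex.norm_real]
          have htn : ‖t‖ ≤ 1 := by
            rw [Real.norm_eq_abs, abs_le]; constructor <;> linarith [ht'.1, ht'.2]
          calc ‖x‖ * (‖t‖ * ‖deriv φ ((t:ℂ) * x)‖) ≤ r * (1 * M') := by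
                apply mul_le_mul hxr' _ (by positivity) hr0
                exact mul_le_mul htn h2 (norm_nonneg _) zero_le_one
            _ = r * M' := by ring
  · exact intervalIntegrable_const
  · -- differentiability
    refine Filter.Eventually.of_forall (fun t ht x hx => ?_)
    have ht' : t ∈ Set.Icc (0:ℝ) 1 := hι ht
    exact hder (t:ℂ) x (hKsub (hmem t ht' x (hxr x hx)))

lemma jensen_exists_log {ρ : ℝ} {g : ℂ → ℂ} (hρ : 0 < ρ)
    (hd : DifferentiableOn ℂ g (ball (0:ℂ) ρ))
    (hne : ∀ z ∈ ball (0:ℂ) ρ, g z ≠ 0) :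
    ∃ h : ℂ → ℂ, (∀ z ∈ ball (0:ℂ) ρ, DifferentiableAt ℂ h z) ∧
      ∀ z ∈ ball (0:ℂ) ρ, Complex.exp (h z) = g z := by
  have hg_an : AnalyticOnNhd ℂ g (ball (0:ℂ) ρ) := hd.analyticOnNhd isOpen_ball
  have hφ : AnalyticOnNhd ℂ (fun z => deriv g z / g z) (ball (0:ℂ) ρ) :=
    hg_an.deriv.div hg_an hne
  obtain ⟨F, hF⟩ := jensen_exists_primitive hρ hφ
  have h0 : (0:ℂ) ∈ ball (0:ℂ) ρ := mem_ball_self hρ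
  set h : ℂ → ℂ := fun z => F z - F 0 + Complex.log (g 0) with hh
  have hh' : ∀ z ∈ ball (0:ℂ) ρ, HasDerivAt h (deriv g z / g z) z := by
    intro z hz
    exact ((hF z hz).sub_const (F 0)).add_const _
  refine ⟨h, fun z hz => (hh' z hz).differentiableAt, ?_⟩
  -- the function u = g * exp(-h) is constant on the ball
  set u : ℂ → ℂ := fun z => g z * Complex.exp (-h z) with hu
  have hu' : ∀ z ∈ ball (0:ℂ) ρ, HasDerivAt u 0 z := by
    intro z hz
    have hg' : HasDerivAt g (deriv g z) z :=
      (hd.differentiableAt (isOpen_ball.mem_nhds hz)).hasDerivAt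
    have hexp : HasDerivAt (fun w => Complex.exp (-h w))
        (Complex.exp (-h z) * -(deriv g z / g z)) z := ((hh' z hz).neg).cexp
    have : HasDerivAt (fun w => g w * Complex.exp (-h w))
        (deriv g z * Complex.exp (-h z) + g z * (Complex.exp (-h z) * -(deriv g z / g z))) z :=
      hg'.mul hexp
    convert this using 1
    have hgz := hne z hz
    field_simp
    ring
  have hconst : ∀ z ∈ ball (0:ℂ) ρ, u z = u 0 := by
    intro z hz
    apply (convex_ball (0:ℂ) ρ).is_const_of_fderivWithin_eq_zero
      (fun w hw => ((hu' w hw).differentiableAt).differentiableWithinAt) _ hz h0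
    intro w hw
    have hdu : DifferentiableAt ℂ u w := (hu' w hw).differentiableAt
    rw [hdu.fderivWithin (isOpen_ball.uniqueDiffWithinAt hw)]
    have := (hu' w hw).hasFDerivAt.fderiv
    rw [this]
    ext v
    simp
  intro z hz
  have huz := hconst z hz
  have hu0 : u 0 = 1 := by
    show g 0 * Complex.exp (-(F 0 - F 0 + Complex.log (g 0))) = 1
    rw [sub_self, zero_add, Complex.exp_neg, Complex.exp_log (hne 0 h0)]
    field_simp
    exact div_self (hne 0 h0)
  rw [hu0] at huz
  have : g z * Complex.exp (-h z) = 1 := huz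
  rw [Complex.exp_neg] at this
  field_simp at this
  exact this.symm

lemma jensen_mvp {ρ : ℝ} {g : ℂ → ℂ} (hρ : 1 < ρ)
    (hd : DifferentiableOn ℂ g (ball (0:ℂ) ρ))
    (hne : ∀ z ∈ ball (0:ℂ) ρ, g z ≠ 0) :
    Real.log (‖g 0‖) =
      (1 / (2 * Real.pi)) * ∫ t in (0:ℝ)..(2 * Real.pi),
        Real.log (‖g (Complex.exp (t * Complex.I))‖) := by
  have hρ0 : (0:ℝ) < ρ := lt_trans one_pos hρ
  obtain ⟨h, hdiff, hexp⟩ := jensen_exists_log hρ0 hd hne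
  have hsub : closedBall (0:ℂ) 1 ⊆ ball (0:ℂ) ρ := closedBall_subset_ball hρ
  have hsphere : ∀ t : ℝ, circleMap 0 1 t ∈ ball (0:ℂ) ρ := by
    intro t
    apply hsub
    rw [mem_closedBall_zero_iff]
    have : ‖circleMap 0 1 t‖ = |1| := norm_circleMap_zero 1 t
    simp only [this, abs_one, le_refl]
  -- Cauchy integral formula for h
  have hcauchy : (∮ z in C(0, 1), (z - 0)⁻¹ • h z) = (2 * Real.pi * I : ℂ) • h 0 := by
    apply Complex.circleIntegral_sub_inv_smul_of_differentiable_on_off_countable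
      (Set.countable_empty) (mem_ball_self one_pos)
    · exact fun z hz => (hdiff z (hsub hz)).continuousAt.continuousWithinAt
    · exact fun z hz => hdiff z (hsub (ball_subset_closedBall hz.1))
  have hcm_ne : ∀ t : ℝ, circleMap 0 1 t ≠ 0 := fun t => by
    intro hzero
    have := norm_circleMap_zero 1 t
    rw [hzero] at this
    simp at this
  -- unfold the circle integral
  have hunfold : (∮ z in C(0, 1), (z - 0)⁻¹ • h z)
      = I * ∫ t in (0:ℝ)..(2 * Real.pi), h (circleMap 0 1 t) := by
    rw [circleIntegral, ← intervalIntegral.integral_const_mul]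
    apply intervalIntegral.integral_congr
    intro t _
    simp only [deriv_circleMap, smul_eq_mul, sub_zero]
    field_simp [hcm_ne t]
  have hint : ∫ t in (0:ℝ)..(2 * Real.pi), h (circleMap 0 1 t) = (2 * Real.pi) * h 0 := by
    have : (I : ℂ) ≠ 0 := I_ne_zero
    apply mul_left_cancel₀ this
    rw [← hunfold, hcauchy]
    rw [smul_eq_mul]
    ring
  -- integrability / continuity of h on the circle
  have hcont : Continuous fun t : ℝ => h (circleMap 0 1 t) := by
    rw [continuous_iff_continuousAt]
    intro t
    exact ((hdiff _ (hsphere t)).continuousAt).comp (continuous_circleMap 0 1).continuousAt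
  have hintg : IntervalIntegrable (fun t : ℝ => h (circleMap 0 1 t)) volume 0 (2 * Real.pi) :=
    hcont.intervalIntegrable _ _
  -- take real parts
  have hre : ∫ t in (0:ℝ)..(2 * Real.pi), (h (circleMap 0 1 t)).re
      = (2 * Real.pi) * (h 0).re := by
    have := Complex.reCLM.intervalIntegral_comp_comm hintg
    simp only [Complex.reCLM_apply] at this
    rw [this, hint]
    simp
  -- identify re h with log abs g
  have hlog : ∀ z ∈ ball (0:ℂ) ρ, Real.log (‖g z‖) = (h z).re := by
    intro z hz
    rw [← hexp z hz, Complex.norm_exp, Real.log_exp]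
  have hcm : ∀ t : ℝ, circleMap 0 1 t = Complex.exp (t * Complex.I) := by
    intro t
    simp [circleMap]
  rw [hlog 0 (hsub (mem_closedBall_self zero_le_one))]
  have : ∫ t in (0:ℝ)..(2 * Real.pi),
      Real.log (‖g (Complex.exp (t * Complex.I))‖)
      = ∫ t in (0:ℝ)..(2 * Real.pi), (h (circleMap 0 1 t)).re := by
    apply intervalIntegral.integral_congr
    intro t _
    show Real.log (‖g (Complex.exp (t * Complex.I))‖) = (h (circleMap 0 1 t)).re
    rw [← hcm t, hlog _ (hsphere t)]
  rw [this, hre]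
  field_simp

lemma jensen_zeros_finite {R : ℝ} {f : ℂ → ℂ} (hR : 1 < R)
    (hd : DifferentiableOn ℂ f (ball (0:ℂ) R)) (h0 : f 0 ≠ 0) :
    {z ∈ closedBall (0:ℂ) 1 | f z = 0}.Finite := by
  by_contra hinf
  rw [← Set.not_infinite, not_not] at hinf
  obtain ⟨x, hxK, hacc⟩ := hinf.exists_accPt_of_subset_isCompact
    (isCompact_closedBall (0:ℂ) 1) (fun z hz => hz.1)
  have hxball : x ∈ ball (0:ℂ) R := closedBall_subset_ball hR hxK
  have hfreq : ∃ᶠ z in nhdsWithin x {x}ᶜ, f z = 0 := by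
    have : ∃ᶠ z in nhdsWithin x {x}ᶜ, z ∈ {z ∈ closedBall (0:ℂ) 1 | f z = 0} :=
      Filter.frequently_iff_neBot.mpr hacc
    exact this.mono fun z hz => hz.2
  have := (hd.analyticOnNhd isOpen_ball).eqOn_zero_of_preconnected_of_frequently_eq_zero
    (convex_ball (0:ℂ) R).isPreconnected hxball hfreq
  exact h0 (this (mem_ball_self (lt_trans one_pos hR)))

-- value of the circle integral of log |e^{it} - a| for |a| < 1 : it is ≥ 0 (in fact = 0).
lemma jensen_blaschke {a : ℂ} (ha : ‖a‖ < 1) (ha0 : a ≠ 0) :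
    (0:ℝ) = (1 / (2 * Real.pi)) * ∫ t in (0:ℝ)..(2 * Real.pi),
        Real.log (‖Complex.exp (t * Complex.I) - a‖) := by
  have haa : (0:ℝ) < ‖a‖ := by
    simpa using ha0
  set ρ : ℝ := (‖a‖)⁻¹ with hρdef
  have hρ : 1 < ρ := by
    rw [hρdef]
    rw [lt_inv_comm₀ one_pos haa] at *
    · simpa using ha
  set F : ℂ → ℂ := fun z => 1 - (starRingEnd ℂ) a * z with hF
  have hFd : DifferentiableOn ℂ F (ball (0:ℂ) ρ) := by
    apply DifferentiableOn.const_sub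
    exact (differentiable_id.const_mul _).differentiableOn
  have hFne : ∀ z ∈ ball (0:ℂ) ρ, F z ≠ 0 := by
    intro z hz
    rw [mem_ball_zero_iff] at hz
    have : ‖(starRingEnd ℂ) a * z‖ < 1 := by
      rw [norm_mul, Complex.norm_conj]
      calc ‖a‖ * ‖z‖ < ‖a‖ * ρ := by
            apply mul_lt_mul_of_pos_left _ haa
            simpa using hz
        _ = 1 := by rw [hρdef]; field_simp
    intro hzero
    rw [hF, sub_eq_zero] at hzero
    rw [← hzero] at this
    simp at this
  have := jensen_mvp hρ hFd hFne
  have hF0 : F 0 = 1 := by simp [hF]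
  rw [hF0] at this
  simp only [norm_one, Real.log_one] at this
  have heq2 : (∫ t in (0:ℝ)..(2 * Real.pi), Real.log (‖F (Complex.exp (t * Complex.I))‖))
    = ∫ t in (0:ℝ)..(2 * Real.pi), Real.log (‖Complex.exp (t * Complex.I) - a‖) := by
    apply intervalIntegral.integral_congr
    intro t _
    show Real.log (‖F (Complex.exp (t * Complex.I))‖)
        = Real.log (‖Complex.exp (t * Complex.I) - a‖)
    congr 1
    set w : ℂ := Complex.exp (t * Complex.I) with hw
    have hw1 : ‖w‖ = 1 := by
        rw [hw]; exact Complex.norm_exp_ofReal_mul_I t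
    have hmul : w * (starRingEnd ℂ) w = 1 := by
        rw [Complex.mul_conj]
        rw [Complex.normSq_eq_norm_sq, hw1]
        norm_num
    calc ‖F w‖ = ‖(starRingEnd ℂ) (F w)‖ := (Complex.norm_conj _).symm
        _ = ‖1 - a * (starRingEnd ℂ) w‖ := by
            rw [hF]; simp [map_sub, map_mul]
        _ = ‖w‖ * ‖1 - a * (starRingEnd ℂ) w‖ := by rw [hw1, one_mul]
        _ = ‖w * (1 - a * (starRingEnd ℂ) w)‖ := (norm_mul _ _).symm
        _ = ‖w - a‖ := by
            congr 1
            have : w * (1 - a * (starRingEnd ℂ) w) = w - a * (w * (starRingEnd ℂ) w) := by ring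
            rw [this, hmul, mul_one]
  rw [← heq2]
  exact this

lemma jensen_key {R : ℝ} (hR : 1 < R) : ∀ (n : ℕ) (f : ℂ → ℂ),
    DifferentiableOn ℂ f (ball (0:ℂ) R) →
    (∀ z ∈ sphere (0:ℂ) 1, f z ≠ 0) → f 0 ≠ 0 →
    {z ∈ closedBall (0:ℂ) 1 | f z = 0}.ncard = n →
    Real.log (‖f 0‖) ≤
      (1 / (2 * Real.pi)) * ∫ t in (0:ℝ)..(2 * Real.pi),
        Real.log (‖f (Complex.exp (t * Complex.I))‖) := by
  have hR0 : (0:ℝ) < R := lt_trans one_pos hR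
  intro n
  induction n with
  | zero =>
    intro f hd hsph h0 hcard
    have hfin := jensen_zeros_finite hR hd h0
    have hempty : {z ∈ closedBall (0:ℂ) 1 | f z = 0} = ∅ :=
      (Set.ncard_eq_zero hfin).mp hcard
    have hne1 : ∀ z ∈ closedBall (0:ℂ) 1, f z ≠ 0 := by
      intro z hz hzero
      exact absurd (Set.eq_empty_iff_forall_notMem.mp hempty z ⟨hz, hzero⟩) (fun h => h)
    -- find a slightly larger ball on which f does not vanish
    set V : Set ℂ := ball (0:ℂ) R ∩ f ⁻¹' {(0:ℂ)}ᶜ with hV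
    have hVopen : IsOpen V :=
      hd.continuousOn.isOpen_inter_preimage isOpen_ball (isOpen_compl_singleton)
    have hsubV : closedBall (0:ℂ) 1 ⊆ V := by
      intro z hz
      exact ⟨closedBall_subset_ball hR hz, hne1 z hz⟩
    obtain ⟨δ, hδpos, hδ⟩ := (isCompact_closedBall (0:ℂ) 1).exists_cthickening_subset_open
      hVopen hsubV
    rw [cthickening_closedBall hδpos.le zero_le_one] at hδ
    have hsubV' : ball (0:ℂ) (δ + 1) ⊆ V := (ball_subset_closedBall).trans hδ
    have := jensen_mvp (g := f) (by linarith : 1 < δ + 1)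
      (hd.mono (fun z hz => (hsubV' hz).1)) (fun z hz => (hsubV' hz).2)
    exact le_of_eq this
  | succ n ih =>
    intro f hd hsph h0 hcard
    have hfin := jensen_zeros_finite hR hd h0
    have hSne : {z ∈ closedBall (0:ℂ) 1 | f z = 0}.Nonempty := by
      rw [Set.nonempty_iff_ne_empty]
      intro he
      rw [he, Set.ncard_empty] at hcard
      exact Nat.succ_ne_zero n hcard.symm
    obtain ⟨a, haB, hfa⟩ := hSne
    have ha1 : ‖a‖ < 1 := by
      rcases lt_or_eq_of_le (mem_closedBall_zero_iff.mp haB) with h | h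
      · simpa using h
      · exfalso
        exact hsph a (by rwa [mem_sphere_zero_iff_norm]) hfa
    have ha0 : a ≠ 0 := by
      intro h
      rw [h] at hfa
      exact h0 hfa
    have haball : a ∈ ball (0:ℂ) R := by
      rw [mem_ball_zero_iff]
      calc ‖a‖ < 1 := by simpa using ha1
        _ < R := hR
    -- power series of f at a
    obtain ⟨p, hp⟩ := hd.analyticAt (isOpen_ball.mem_nhds haball)
    have hp_ne : p ≠ 0 := by
      intro hp0
      rw [hp0] at hp
      have hev : ∀ᶠ z in nhds a, f z = 0 := hp.eventually_eq_zero
      have hfreq : ∃ᶠ z in nhdsWithin a {a}ᶜ, f z = 0 :=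
        (hev.filter_mono nhdsWithin_le_nhds).frequently
      have := (hd.analyticOnNhd isOpen_ball).eqOn_zero_of_preconnected_of_frequently_eq_zero
        (convex_ball (0:ℂ) R).isPreconnected haball hfreq
      exact h0 (this (mem_ball_self hR0))
    set m : ℕ := p.order with hm
    set g : ℂ → ℂ := (swap dslope a)^[m] f with hg
    have hga : g a ≠ 0 := hp.iterate_dslope_fslope_ne_zero hp_ne
    -- the key global factorization
    have hkey : ∀ z : ℂ, z ≠ a → f z = (z - a) ^ m * g z := by
      have main : ∀ k : ℕ, k ≤ m → ∀ z : ℂ, z ≠ a →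
          f z = (z - a) ^ k * (swap dslope a)^[k] f z := by
        intro k
        induction k with
        | zero => intro _ z _; simp
        | succ k ihk =>
          intro hk z hz
          have hk' : k ≤ m := Nat.le_of_succ_le hk
          have hzero : (swap dslope a)^[k] f a = 0 := by
            have hq := hp.has_fpower_series_iterate_dslope_fslope k
            have h1 : (fslope^[k] p).coeff 0 = (swap dslope a)^[k] f a :=
              hq.coeff_zero 1
            rw [← h1, coeff_iterate_fslope]
            rw [coeff_eq_zero]
            exact apply_eq_zero_of_lt_order (by simpa using Nat.lt_of_succ_le hk)
          have hstep : (swap dslope a)^[k+1] f z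
              = ((swap dslope a)^[k] f z) / (z - a) := by
            rw [Function.iterate_succ_apply']
            show dslope ((swap dslope a)^[k] f) a z = _
            rw [dslope_of_ne _ hz, slope_def_field, hzero, sub_zero]
          have hza : z - a ≠ 0 := sub_ne_zero.mpr hz
          rw [hstep]
          field_simp
          rw [ihk hk' z hz]
          ring
      exact main m le_rfl
    -- g is differentiable on the ball
    have hg_diff : DifferentiableOn ℂ g (ball (0:ℂ) R) := by
      intro z hz
      rcases eq_or_ne z a with rfl | hzne
      · exact (hp.has_fpower_series_iterate_dslope_fslope m).analyticAt.differentiableAt.differentiableWithinAt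
      · have hq : DifferentiableAt ℂ (fun w => f w / (w - a) ^ m) z := by
          apply DifferentiableAt.div
          · exact hd.differentiableAt (isOpen_ball.mem_nhds hz)
          · exact ((differentiable_id.sub_const a).pow m).differentiableAt
          · exact pow_ne_zero m (sub_ne_zero.mpr hzne)
        have hev : g =ᶠ[nhds z] fun w => f w / (w - a) ^ m := by
          filter_upwards [isOpen_compl_singleton.mem_nhds (by simpa using hzne : z ∈ ({a}ᶜ : Set ℂ))] with w hw
          have hwa : w ≠ a := by simpa using hw
          rw [hkey w hwa]
          field_simp [pow_ne_zero m (sub_ne_zero.mpr hwa)]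
        exact ((hev.differentiableAt_iff).mpr hq).differentiableWithinAt
    -- zero set of g
    have hzset : {z ∈ closedBall (0:ℂ) 1 | g z = 0}
        = {z ∈ closedBall (0:ℂ) 1 | f z = 0} \ {a} := by
      ext z
      constructor
      · rintro ⟨hz1, hz2⟩
        have hzne : z ≠ a := by
          intro h; rw [h] at hz2; exact hga hz2
        refine ⟨⟨hz1, ?_⟩, by simpa using hzne⟩
        rw [hkey z hzne, hz2, mul_zero]
      · rintro ⟨⟨hz1, hz2⟩, hz3⟩
        have hzne : z ≠ a := by simpa using hz3
        refine ⟨hz1, ?_⟩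
        have heqz := hkey z hzne
        rw [hz2] at heqz
        have hza : (z - a) ^ m ≠ 0 := pow_ne_zero m (sub_ne_zero.mpr hzne)
        exact (mul_eq_zero.mp heqz.symm).resolve_left hza
    have hcard' : {z ∈ closedBall (0:ℂ) 1 | g z = 0}.ncard = n := by
      rw [hzset, Set.ncard_diff_singleton_of_mem
        (show a ∈ {z ∈ closedBall (0:ℂ) 1 | f z = 0} from ⟨haB, hfa⟩), hcard]
      simp
    -- g has no zeroes on the sphere, g 0 ≠ 0
    have hg_sph : ∀ z ∈ sphere (0:ℂ) 1, g z ≠ 0 := by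
      intro z hz hzero
      have hzne : z ≠ a := by
        intro h
        rw [mem_sphere_zero_iff_norm, h] at hz
        rw [← hz] at ha1
        simp at ha1
      apply hsph z hz
      rw [hkey z hzne, hzero, mul_zero]
    have hg0 : g 0 ≠ 0 := by
      intro hzero
      apply h0
      rw [hkey 0 (Ne.symm ha0), hzero, mul_zero]
    -- apply the inductive hypothesis to g
    have hIH := ih g hg_diff hg_sph hg0 hcard'
    -- pointwise splitting on the circle
    have hsplit : ∀ t : ℝ, Real.log (‖f (Complex.exp (t * Complex.I))‖)
        = m * Real.log (‖Complex.exp (t * Complex.I) - a‖)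
          + Real.log (‖g (Complex.exp (t * Complex.I))‖) := by
      intro t
      set w : ℂ := Complex.exp (t * Complex.I) with hw
      have hw1 : ‖w‖ = 1 := Complex.norm_exp_ofReal_mul_I t
      have hwsph : w ∈ sphere (0:ℂ) 1 := by
        rw [mem_sphere_zero_iff_norm]; simpa using hw1
      have hwa : w ≠ a := by
        intro h
        rw [h] at hw1
        rw [hw1] at ha1
        exact lt_irrefl 1 ha1
      rw [hkey w hwa, norm_mul, norm_pow]
      rw [Real.log_mul (pow_ne_zero m (by simpa [sub_eq_zero] using hwa)) (by simpa using hg_sph w hwsph)]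
      rw [Real.log_pow]
    -- continuity facts for integrability
    have hwmem : ∀ t : ℝ, Complex.exp ((t:ℂ) * Complex.I) ∈ ball (0:ℂ) R := by
      intro t
      rw [mem_ball_zero_iff]
      have := Complex.norm_exp_ofReal_mul_I t
      rw [show ‖Complex.exp ((t:ℂ) * Complex.I)‖ = ‖Complex.exp ((t:ℂ) * Complex.I)‖ from rfl, this]
      exact hR
    have hexp_cont : Continuous fun t : ℝ => Complex.exp ((t:ℂ) * Complex.I) :=
      Complex.continuous_exp.comp (Complex.continuous_ofReal.mul continuous_const)
    have hI1 : IntervalIntegrable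
        (fun t : ℝ => Real.log (‖Complex.exp (t * Complex.I) - a‖))
        volume 0 (2 * Real.pi) := by
      apply Continuous.intervalIntegrable
      rw [continuous_iff_continuousAt]
      intro t
      have hlg : ContinuousAt Real.log (‖Complex.exp ((t:ℂ) * Complex.I) - a‖) := by
        apply Real.continuousAt_log
        have hwa : Complex.exp ((t:ℂ) * Complex.I) ≠ a := by
          intro h
          have := Complex.norm_exp_ofReal_mul_I t
          rw [h] at this
          rw [this] at ha1
          exact lt_irrefl 1 ha1
        simpa [sub_eq_zero] using hwa
      exact ContinuousAt.comp (x := t) hlg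
        (continuous_norm.comp (hexp_cont.sub continuous_const)).continuousAt
    have hI2 : IntervalIntegrable
        (fun t : ℝ => Real.log (‖g (Complex.exp (t * Complex.I))‖))
        volume 0 (2 * Real.pi) := by
      apply Continuous.intervalIntegrable
      rw [continuous_iff_continuousAt]
      intro t
      have hlg : ContinuousAt Real.log (‖g (Complex.exp ((t:ℂ) * Complex.I))‖) := by
        apply Real.continuousAt_log
        have hwsph : Complex.exp ((t:ℂ) * Complex.I) ∈ sphere (0:ℂ) 1 := by
          rw [mem_sphere_zero_iff_norm]
          simpa using Complex.norm_exp_ofReal_mul_I t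
        simpa using hg_sph _ hwsph
      have hcg : ContinuousAt (fun t : ℝ => ‖g (Complex.exp ((t:ℂ) * Complex.I))‖) t := by
        apply ContinuousAt.comp (x := t) continuous_norm.continuousAt
        exact ContinuousAt.comp (x := t)
          ((hg_diff.differentiableAt (isOpen_ball.mem_nhds (hwmem t))).continuousAt)
          hexp_cont.continuousAt
      exact ContinuousAt.comp (x := t) hlg hcg
    -- split the integral
    have hIsplit : ∫ t in (0:ℝ)..(2 * Real.pi),
        Real.log (‖f (Complex.exp (t * Complex.I))‖)
        = m * (∫ t in (0:ℝ)..(2 * Real.pi),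
            Real.log (‖Complex.exp (t * Complex.I) - a‖))
          + ∫ t in (0:ℝ)..(2 * Real.pi),
            Real.log (‖g (Complex.exp (t * Complex.I))‖) := by
      rw [← intervalIntegral.integral_const_mul, ← intervalIntegral.integral_add (hI1.const_mul _) hI2]
      apply intervalIntegral.integral_congr
      intro t _
      exact hsplit t
    -- the Blaschke integral is zero
    have hbl := jensen_blaschke ha1 ha0
    -- final computation
    have hlhs : Real.log (‖f 0‖)
        = m * Real.log (‖a‖) + Real.log (‖g 0‖) := by
      rw [hkey 0 (Ne.symm ha0), norm_mul, norm_pow]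
      rw [Real.log_mul (pow_ne_zero m (by simpa using ha0)) (by simpa using hg0)]
      rw [Real.log_pow]
      congr 2
      rw [zero_sub, norm_neg]
    have hlog_a : Real.log (‖a‖) < 0 :=
      Real.log_neg (by simpa using ha0) ha1
    have hm_nonneg : (0:ℝ) ≤ m := Nat.cast_nonneg m
    calc Real.log (‖f 0‖)
        = m * Real.log (‖a‖) + Real.log (‖g 0‖) := hlhs
      _ ≤ Real.log (‖g 0‖) := by nlinarith
      _ ≤ (1 / (2 * Real.pi)) * ∫ t in (0:ℝ)..(2 * Real.pi),
            Real.log (‖g (Complex.exp (t * Complex.I))‖) := hIH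
      _ = (1 / (2 * Real.pi)) * ∫ t in (0:ℝ)..(2 * Real.pi),
            Real.log (‖f (Complex.exp (t * Complex.I))‖) := by
          have h2π : (1:ℝ) / (2 * Real.pi) ≠ 0 := by positivity
          have hIa : (∫ t in (0:ℝ)..(2 * Real.pi),
              Real.log (‖Complex.exp (t * Complex.I) - a‖)) = 0 :=
            (mul_eq_zero.mp hbl.symm).resolve_left h2π
          rw [hIsplit, hIa]
          ring


/-- If `f` is analytic on an open neighborhood of the closed unit disc, has no
zeroes on the unit circle, and `f 0 ≠ 0`, then
`ln |f 0| ≤ (1/2π) ∫₀^{2π} ln |f(e^{it})| dt`. -/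
theorem stmt_13 (f : ℂ → ℂ) (U : Set ℂ) (hU : IsOpen U)
    (hsub : Metric.closedBall (0 : ℂ) 1 ⊆ U)
    (hanal : DifferentiableOn ℂ f U)
    (hne : ∀ z ∈ Metric.sphere (0 : ℂ) 1, f z ≠ 0)
    (h0 : f 0 ≠ 0) :
    Real.log (‖f 0‖) ≤
      (1 / (2 * Real.pi)) * ∫ t in (0 : ℝ)..(2 * Real.pi),
        Real.log (‖f (Complex.exp (t * Complex.I))‖) := by
  obtain ⟨δ, hδpos, hδ⟩ := (isCompact_closedBall (0:ℂ) 1).exists_cthickening_subset_open hU hsub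
  rw [cthickening_closedBall hδpos.le zero_le_one] at hδ
  have hR : (1:ℝ) < δ + 1 := by linarith
  exact jensen_key hR ({z ∈ closedBall (0:ℂ) 1 | f z = 0}.ncard) f
    (hanal.mono (ball_subset_closedBall.trans hδ)) hne h0 rfl
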